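/- A 2×2 matrix A = [[a,b],[c,d]] with entries in the real quaternions ℍ is invertible in the ring of 2×2 quaternionic matrices if and only if det_ℍ(A) ≠ 0. -/

import Mathlib

open scoped Quaternion

/-- The Dieudonné determinant of a 2×2 quaternionic matrix. -/
noncomputable def detH (A : Matrix (Fin 2) (Fin 2) ℍ[ℝ]) : ℝ :=
  Real.sqrt (‖A 0 0‖ ^ 2 * ‖A 1 1‖ ^ 2 + ‖A 1 0‖ ^ 2 * ‖A 0 1‖ ^ 2
    - 2 * (A 1 0 * star (A 0 0) * A 0 1 * star (A 1 1)).re)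

namespace DetHAux

open Quaternion

lemma normSq_sub (u v : ℍ[ℝ]) :
    normSq (u - v) = normSq u + normSq v - 2 * (u * star v).re := by
  rw [sub_eq_add_neg, normSq_add, star_neg, mul_neg, re_neg, normSq_neg]; ring

lemma coe_mul_re (r : ℝ) (q : ℍ[ℝ]) : (((r : ℝ) : ℍ[ℝ]) * q).re = r * q.re := by
  simp [re_mul]

/-- The key algebraic identity relating the Dieudonné determinant expression
to the (scaled) Schur complement. -/
lemma key (a b c d : ℍ[ℝ]) :
    normSq (((normSq a : ℝ) : ℍ[ℝ]) * d - c * star a * b)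
      = normSq a * (normSq a * normSq d + normSq c * normSq b
          - 2 * (c * star a * b * star d).re) := by
  rw [normSq_sub]
  have h2 : ((((normSq a : ℝ) : ℍ[ℝ]) * d) * star (c * star a * b)).re
      = normSq a * (c * star a * b * star d).re := by
    rw [mul_assoc, coe_mul_re]
    congr 1
    have : c * star a * b * star d = star (d * star (c * star a * b)) := by
      simp [star_mul, mul_assoc]
    rw [this, re_star]
  rw [h2, map_mul, map_mul, map_mul, normSq_coe, normSq_star]
  ring

lemma normSq_pos {a : ℍ[ℝ]} (h : a ≠ 0) : 0 < normSq a :=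
  lt_of_le_of_ne normSq_nonneg (Ne.symm (normSq_ne_zero.2 h))

lemma fin_two_ext {p q r t p' q' r' t' : ℍ[ℝ]} (h1 : p = p') (h2 : q = q')
    (h3 : r = r') (h4 : t = t') : !![p, q; r, t] = !![p', q'; r', t'] := by
  rw [h1, h2, h3, h4]

end DetHAux

/-- A 2×2 quaternionic matrix is invertible iff its Dieudonné determinant is nonzero. -/
theorem isUnit_iff_detH_ne_zero (a b c d : ℍ[ℝ]) :
    IsUnit (!![a, b; c, d]) ↔ detH !![a, b; c, d] ≠ 0 := by
  open Quaternion DetHAux in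
  -- Reduce the determinant condition to positivity of the inner expression.
  have hdet : detH !![a, b; c, d] ≠ 0 ↔
      0 < normSq a * normSq d + normSq c * normSq b
        - 2 * (c * star a * b * star d).re := by
    have hn : ∀ x : ℍ[ℝ], ‖x‖ ^ 2 = normSq x := fun x => by
      rw [sq, ← normSq_eq_norm_mul_self]
    rw [detH, Real.sqrt_ne_zero']
    simp [hn]
  rw [hdet]
  by_cases ha : a = 0
  · subst ha
    have hE : normSq (0 : ℍ[ℝ]) * normSq d + normSq c * normSq b
        - 2 * (c * star (0:ℍ[ℝ]) * b * star d).re = normSq c * normSq b := by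
      simp
    rw [hE]
    constructor
    · rintro hM
      obtain ⟨B, hMB, hBM⟩ := isUnit_iff_exists.mp hM
      have hb : b ≠ 0 := by
        rintro rfl
        have h := congrFun (congrFun hMB 0) 0
        simp [Matrix.mul_apply, Fin.sum_univ_two] at h
      have hc : c ≠ 0 := by
        rintro rfl
        have h := congrFun (congrFun hBM 0) 0
        simp [Matrix.mul_apply, Fin.sum_univ_two] at h
      exact mul_pos (DetHAux.normSq_pos hc) (DetHAux.normSq_pos hb)
    · intro hpos
      have hc : c ≠ 0 := fun h => by simp [h] at hpos
      have hb : b ≠ 0 := fun h => by simp [h] at hpos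
      have hcu : ∀ x : ℍ[ℝ], c * (c⁻¹ * x) = x := fun x => by
        rw [← mul_assoc, mul_inv_cancel₀ hc, one_mul]
      refine isUnit_iff_exists.mpr ⟨!![-(c⁻¹ * (d * b⁻¹)), c⁻¹; b⁻¹, 0], ?_, ?_⟩ <;>
      · rw [Matrix.mul_fin_two, Matrix.one_fin_two]
        refine DetHAux.fin_two_ext ?_ ?_ ?_ ?_ <;>
        · simp only [mul_add, add_mul, mul_neg, neg_mul, mul_assoc, zero_mul, mul_zero,
            zero_add, add_zero, hcu, mul_inv_cancel₀ hb, mul_inv_cancel₀ hc,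
            inv_mul_cancel₀ hb, inv_mul_cancel₀ hc, mul_one, one_mul]
          try abel
  · -- a ≠ 0 case
    set s : ℍ[ℝ] := d - c * a⁻¹ * b with hs
    have hna : (0:ℝ) < normSq a := DetHAux.normSq_pos ha
    have hnane : (normSq a : ℝ) ≠ 0 := ne_of_gt hna
    have hstar : ((normSq a : ℝ) : ℍ[ℝ]) * a⁻¹ = star a := by
      rw [← star_mul_self, mul_assoc, mul_inv_cancel₀ ha, mul_one]
    have he : ((normSq a : ℝ) : ℍ[ℝ]) * d - c * star a * b
        = ((normSq a : ℝ) : ℍ[ℝ]) * s := by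
      rw [hs, mul_sub, ← hstar]
      simp [Quaternion.coe_mul_eq_smul, mul_smul_comm, smul_mul_assoc]
    -- positivity of E ↔ s ≠ 0
    have hEs : (0 < normSq a * normSq d + normSq c * normSq b
        - 2 * (c * star a * b * star d).re) ↔ s ≠ 0 := by
      have hk := DetHAux.key a b c d
      rw [he, map_mul, normSq_coe] at hk
      have hEeq : normSq a * normSq d + normSq c * normSq b
          - 2 * (c * star a * b * star d).re = normSq a * normSq s := by
        refine mul_left_cancel₀ hnane ?_
        rw [← hk]; ring
      rw [hEeq]
      constructor
      · intro h h0
        rw [h0] at h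
        simp at h
      · intro h
        exact mul_pos hna (DetHAux.normSq_pos h)
    rw [hEs]
    constructor
    · rintro hM hs0
      obtain ⟨B, hMB, _⟩ := isUnit_iff_exists.mp hM
      have h01 := congrFun (congrFun hMB 0) 1
      have h11 := congrFun (congrFun hMB 1) 1
      simp [Matrix.mul_apply, Fin.sum_univ_two] at h01 h11
      have hd : d = c * (a⁻¹ * b) := by
        have h' : d - c * a⁻¹ * b = 0 := by rw [← hs, hs0]
        rw [sub_eq_zero] at h'
        rw [h', mul_assoc]
      have hua : ∀ x : ℍ[ℝ], a⁻¹ * (a * x) = x := fun x => by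
        rw [← mul_assoc, inv_mul_cancel₀ ha, one_mul]
      have h := congrArg (fun x => c * (a⁻¹ * x)) h01
      simp only [mul_add, mul_zero, hua] at h
      rw [show c * (a⁻¹ * (b * B 1 1)) = d * B 1 1 by simp [hd, mul_assoc]] at h
      rw [h11] at h
      exact one_ne_zero h
    · intro hsne
      have hau : ∀ x : ℍ[ℝ], a * (a⁻¹ * x) = x := fun x => by
        rw [← mul_assoc, mul_inv_cancel₀ ha, one_mul]
      have hua : ∀ x : ℍ[ℝ], a⁻¹ * (a * x) = x := fun x => by
        rw [← mul_assoc, inv_mul_cancel₀ ha, one_mul]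
      have hsv : ∀ x : ℍ[ℝ], s * (s⁻¹ * x) = x := fun x => by
        rw [← mul_assoc, mul_inv_cancel₀ hsne, one_mul]
      have hvs : ∀ x : ℍ[ℝ], s⁻¹ * (s * x) = x := fun x => by
        rw [← mul_assoc, inv_mul_cancel₀ hsne, one_mul]
      have hd : d = s + c * (a⁻¹ * b) := by
        rw [hs, mul_assoc, sub_add_cancel]
      refine isUnit_iff_exists.mpr
        ⟨!![a⁻¹ + a⁻¹ * (b * (s⁻¹ * (c * a⁻¹))), -(a⁻¹ * (b * s⁻¹));
           -(s⁻¹ * (c * a⁻¹)), s⁻¹], ?_, ?_⟩ <;>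
      · rw [Matrix.mul_fin_two, Matrix.one_fin_two, hd]
        refine DetHAux.fin_two_ext ?_ ?_ ?_ ?_ <;>
        · simp only [mul_add, add_mul, mul_neg, neg_mul, mul_assoc, hau, hua, hsv, hvs,
            mul_inv_cancel₀ ha, inv_mul_cancel₀ ha, mul_inv_cancel₀ hsne,
            inv_mul_cancel₀ hsne, mul_one, one_mul]
          try abel
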